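/- For real numbers $a$ (representing $\sigma_{s,n}$), $b$ (representing $d\cdot n_w - g_0$) and any $\gamma > 0$, the three conditions $b \le 0$, $a \le 0$, and $a b = 0$ hold simultaneously if and only if $a = -\gamma \max\{0, b - a/\gamma\}$. -/

import Mathlib

theorem signorini_chouly_hild (a b γ : ℝ) (hγ : 0 < γ) :
    (b ≤ 0 ∧ a ≤ 0 ∧ a * b = 0) ↔ a = -γ * max 0 (b - a / γ) := by
  have hγ' : γ ≠ 0 := ne_of_gt hγ
  constructor
  · rintro ⟨hb, ha, hab⟩
    rcases mul_eq_zero.mp hab with h | h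
    · subst h
      have : b - 0 / γ ≤ 0 := by simpa using hb
      rw [max_eq_left this]; ring
    · subst h
      have h1 : (0:ℝ) ≤ 0 - a / γ := by
        have : a / γ ≤ 0 := div_nonpos_of_nonpos_of_nonneg ha hγ.le
        linarith
      rw [max_eq_right h1]
      field_simp
      ring
  · intro h
    rcases le_or_gt (b - a / γ) 0 with hm | hm
    · rw [max_eq_left hm] at h
      simp at h
      subst h
      simp only [zero_div, sub_zero] at hm
      exact ⟨hm, le_refl 0, by ring⟩
    · rw [max_eq_right hm.le] at h
      have hb0 : b = 0 := by
        have := h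
        field_simp at this
        nlinarith [mul_pos hγ hγ]
      subst hb0
      have ha : a ≤ 0 := by
        have := hm
        simp only [zero_sub] at this
        nlinarith [mul_pos this hγ]
      exact ⟨le_refl 0, ha, by ring⟩
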